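/- For every real t > 0 and every real p with 0 < p ≤ 1, one has (t+2)^p / ((t+2)^p − (t+1)^p) ≥ (t+1)^p / ((t+1)^p − t^p) + 1/p. Equivalently, the function f(t) = (t+1)^p/((t+1)^p − t^p) satisfies f(t+1) ≥ f(t) + 1/p for all t > 0. -/

import Mathlib

open Real Set

lemma convexOn_sinh : ConvexOn ℝ (Set.Ici (0:ℝ)) Real.sinh := by
  refine convexOn_of_deriv2_nonneg (convex_Ici 0) Real.continuous_sinh.continuousOn
    Real.differentiable_sinh.differentiableOn ?_ ?_
  · rw [Real.deriv_sinh]; exact Real.differentiable_cosh.differentiableOn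
  · intro x hx
    rw [interior_Ici, mem_Ioi] at hx
    simp only [Function.iterate_succ, Function.iterate_zero, Function.comp_apply, Function.id_def,
      Real.deriv_sinh, Real.deriv_cosh]
    exact (Real.sinh_pos_iff.2 hx).le

lemma sinh_mul_le {p s : ℝ} (hp0 : 0 ≤ p) (hp1 : p ≤ 1) (hs : 0 ≤ s) :
    Real.sinh (p * s) ≤ p * Real.sinh s := by
  have h := convexOn_sinh.2 (mem_Ici.2 hs) (mem_Ici.2 le_rfl) hp0 (by linarith : (0:ℝ) ≤ 1 - p)
    (by ring)
  simpa [Real.sinh_zero, smul_eq_mul] using h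

lemma key_rpow {x p : ℝ} (hx : 0 < x) (hp0 : 0 < p) (hp1 : p ≤ 1) :
    (x + 1) ^ p - x ^ p ≤ p * (x * (x + 1)) ^ ((p - 1) / 2) := by
  have hx1 : (0:ℝ) < x + 1 := by linarith
  have hxx : (0:ℝ) < x * (x + 1) := mul_pos hx hx1
  set g : ℝ := Real.sqrt (x * (x + 1)) with hgdef
  set l : ℝ := Real.sqrt ((x + 1) / x) with hldef
  have hg : 0 < g := Real.sqrt_pos.2 hxx
  have hl0 : 0 < l := Real.sqrt_pos.2 (by positivity)
  have hl1 : 1 ≤ l := by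
    rw [hldef, Real.one_le_sqrt]
    rw [le_div_iff₀ hx]; linarith
  have hgl : g * l = x + 1 := by
    rw [hgdef, hldef, ← Real.sqrt_mul hxx.le]
    rw [show x * (x + 1) * ((x + 1) / x) = (x + 1) ^ 2 by field_simp]
    exact Real.sqrt_sq hx1.le
  have hgx : g = x * l := by
    rw [hgdef, hldef, show x = Real.sqrt (x ^ 2) from (Real.sqrt_sq hx.le).symm]
    rw [← Real.sqrt_mul (by positivity)]
    congr 1; field_simp; ring
    exact Real.sq_sqrt (by positivity)
  have hglinv : g * l⁻¹ = x := by
    rw [hgx]; field_simp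
  set s : ℝ := Real.log l with hsdef
  have hs : 0 ≤ s := Real.log_nonneg hl1
  -- rpow identities
  have hx1p : (x + 1) ^ p = g ^ p * l ^ p := by
    rw [← hgl, Real.mul_rpow hg.le hl0.le]
  have hxp : x ^ p = g ^ p * l ^ (-p) := by
    rw [hgx, Real.mul_rpow hx.le hl0.le, mul_assoc, ← Real.rpow_add hl0]
    simp
  have hlp : l ^ p = Real.exp (p * s) := by
    rw [Real.rpow_def_of_pos hl0, hsdef, mul_comm]
  have hlnp : l ^ (-p) = Real.exp (-(p * s)) := by
    rw [Real.rpow_def_of_pos hl0, hsdef]; ring_nf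
  have hgp : g ^ p = g ^ (p - 1) * g := by
    rw [← Real.rpow_add_one hg.ne' (p - 1)]; ring_nf
  have hsinh : Real.exp (p * s) - Real.exp (-(p * s)) ≤ p * (Real.exp s - Real.exp (-s)) := by
    have h1 := sinh_mul_le hp0.le hp1 hs
    rw [Real.sinh_eq, Real.sinh_eq] at h1
    linarith
  have hexps : Real.exp s = l := Real.exp_log hl0
  have hexpns : Real.exp (-s) = l⁻¹ := by rw [Real.exp_neg, hexps]
  have hgpow : g ^ (p - 1) = (x * (x + 1)) ^ ((p - 1) / 2) := by
    rw [hgdef, Real.sqrt_eq_rpow, ← Real.rpow_mul hxx.le]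
    ring_nf
  have hgppos : (0:ℝ) < g ^ p := Real.rpow_pos_of_pos hg p
  calc (x + 1) ^ p - x ^ p = g ^ p * (Real.exp (p * s) - Real.exp (-(p * s))) := by
        rw [hx1p, hxp, hlp, hlnp]; ring
    _ ≤ g ^ p * (p * (Real.exp s - Real.exp (-s))) :=
        mul_le_mul_of_nonneg_left hsinh hgppos.le
    _ = p * g ^ (p - 1) * (g * l - g * l⁻¹) := by rw [hexps, hexpns, hgp]; ring
    _ = p * (x * (x + 1)) ^ ((p - 1) / 2) := by rw [hgl, hglinv, hgpow]; ring

lemma f_hasDeriv (p : ℝ) (hp0 : 0 < p) {x : ℝ} (hx : 0 < x) :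
    HasDerivAt (fun y : ℝ => (y + 1) ^ p / ((y + 1) ^ p - y ^ p))
      (p * (x * (x + 1)) ^ (p - 1) / ((x + 1) ^ p - x ^ p) ^ 2) x := by
  have hx1 : (0:ℝ) < x + 1 := by linarith
  have hA : HasDerivAt (fun y : ℝ => (y + 1) ^ p) (p * (x + 1) ^ (p - 1)) x := by
    have h := (Real.hasDerivAt_rpow_const (p := p) (x := x + 1)
      (Or.inl hx1.ne')).comp x ((hasDerivAt_id x).add_const 1)
    simpa [Function.comp_def] using h
  have hB : HasDerivAt (fun y : ℝ => y ^ p) (p * x ^ (p - 1)) x :=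
    Real.hasDerivAt_rpow_const (Or.inl hx.ne')
  have hD : HasDerivAt (fun y : ℝ => (y + 1) ^ p - y ^ p)
      (p * (x + 1) ^ (p - 1) - p * x ^ (p - 1)) x := hA.sub hB
  have hpos : 0 < (x + 1) ^ p - x ^ p :=
    sub_pos.2 (Real.rpow_lt_rpow hx.le (by linarith) hp0)
  have h := hA.div hD hpos.ne'
  refine h.congr_deriv ?_
  congr 1
  have e1 : (x + 1) ^ p = (x + 1) ^ (p - 1) * (x + 1) := by
    rw [← Real.rpow_add_one hx1.ne' (p - 1)]; ring_nf
  have e2 : x ^ p = x ^ (p - 1) * x := by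
    rw [← Real.rpow_add_one hx.ne' (p - 1)]; ring_nf
  have e3 : (x * (x + 1)) ^ (p - 1) = x ^ (p - 1) * (x + 1) ^ (p - 1) :=
    Real.mul_rpow hx.le hx1.le
  rw [e3, e1, e2]; ring

/-- For every real `t > 0` and real `0 < p ≤ 1`,
`(t+2)^p/((t+2)^p − (t+1)^p) ≥ (t+1)^p/((t+1)^p − t^p) + 1/p`. -/
theorem stmt_5 (t p : ℝ) (ht : 0 < t) (hp0 : 0 < p) (hp1 : p ≤ 1) :
    (t + 2) ^ p / ((t + 2) ^ p - (t + 1) ^ p) ≥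
      (t + 1) ^ p / ((t + 1) ^ p - t ^ p) + 1 / p := by
  set f : ℝ → ℝ := fun y => (y + 1) ^ p / ((y + 1) ^ p - y ^ p) with hf
  have hcont : ContinuousOn f (Set.Icc t (t + 1)) := fun x hx =>
    (f_hasDeriv p hp0 (lt_of_lt_of_le ht hx.1)).continuousAt.continuousWithinAt
  obtain ⟨c, hc, hceq⟩ := exists_hasDerivAt_eq_slope f
    (fun x => p * (x * (x + 1)) ^ (p - 1) / ((x + 1) ^ p - x ^ p) ^ 2)
    (by linarith : t < t + 1) hcont
    (fun x hx => f_hasDeriv p hp0 (lt_trans ht hx.1))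
  have hc0 : 0 < c := lt_trans ht hc.1
  have hc1 : (0:ℝ) < c + 1 := by linarith
  have hN : (0:ℝ) < (c * (c + 1)) ^ (p - 1) := Real.rpow_pos_of_pos (by positivity) _
  have hDpos : 0 < (c + 1) ^ p - c ^ p :=
    sub_pos.2 (Real.rpow_lt_rpow hc0.le (by linarith) hp0)
  have hkey := key_rpow hc0 hp0 hp1
  have hsq : ((c * (c + 1)) ^ ((p - 1) / 2)) ^ 2 = (c * (c + 1)) ^ (p - 1) := by
    rw [sq, ← Real.rpow_add (by positivity : (0:ℝ) < c * (c + 1))]; ring_nf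
  have hD2 : ((c + 1) ^ p - c ^ p) ^ 2 ≤ p ^ 2 * (c * (c + 1)) ^ (p - 1) := by
    calc ((c + 1) ^ p - c ^ p) ^ 2 ≤ (p * (c * (c + 1)) ^ ((p - 1) / 2)) ^ 2 :=
          pow_le_pow_left₀ hDpos.le hkey 2
      _ = p ^ 2 * (c * (c + 1)) ^ (p - 1) := by rw [mul_pow, hsq]
  have hge : 1 / p ≤ p * (c * (c + 1)) ^ (p - 1) / ((c + 1) ^ p - c ^ p) ^ 2 := by
    rw [div_le_div_iff₀ hp0 (by positivity)]
    calc 1 * ((c + 1) ^ p - c ^ p) ^ 2 ≤ p ^ 2 * (c * (c + 1)) ^ (p - 1) := by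
          rw [one_mul]; exact hD2
      _ = p * (c * (c + 1)) ^ (p - 1) * p := by ring
  rw [hceq] at hge
  have h1 : f (t + 1) - f t ≥ 1 / p := by
    rw [show t + 1 - t = (1:ℝ) by ring, div_one] at hge
    linarith
  have h2 : f (t + 1) = (t + 2) ^ p / ((t + 2) ^ p - (t + 1) ^ p) := by
    simp only [hf]; rw [show t + 1 + (1:ℝ) = t + 2 by ring]
  have h3 : f t = (t + 1) ^ p / ((t + 1) ^ p - t ^ p) := rfl
  rw [h2, h3] at h1
  linarith
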